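/- For each γ ∈ [0,1] there is a unique solution h(γ) ∈ [0,1] of h = (1 − γ)·(1 − (1 − p⁺)·exp(−λ·q⁺·h)). Moreover, if c and ℓ are reals with ℓ > 0 and p⁺·ℓ < c ≤ h(0)·ℓ, then there exists a unique γ* ∈ [0,1) such that h(γ*)·ℓ = (1 − γ*)·c; equivalently, γ* is the unique point with 1 − γ* = h(γ*)·ℓ/c and h(γ*) = (h(γ*)·ℓ/c)·(1 − (1 − p⁺)·exp(−λ·q⁺·h(γ*))). -/

import Mathlib

open Set

private lemma expSlope {a u v w : ℝ} (ha : 0 < a) (huv : u < v) (hvw : v < w) :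
    (Real.exp (-(a*v)) - Real.exp (-(a*u))) * (w - v)
      < (Real.exp (-(a*w)) - Real.exp (-(a*v))) * (v - u) := by
  have key := strictConvexOn_exp.slope_strict_mono_adjacent (Set.mem_univ (-(a*w)))
      (Set.mem_univ (-(a*u))) (show -(a*w) < -(a*v) by nlinarith)
      (show -(a*v) < -(a*u) by nlinarith)
  rw [div_lt_div_iff₀ (by nlinarith) (by nlinarith)] at key
  nlinarith [key]

private lemma fixedUniqueAux {a b k : ℝ} (ha : 0 < a) (hb : 0 < b) (hk : 0 < k) (hk1 : k < 1)
    {x y : ℝ} (hx0 : 0 ≤ x) (hxy : x < y)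
    (hx : x = b * (1 - k * Real.exp (-(a*x))))
    (hy : y = b * (1 - k * Real.exp (-(a*y)))) : False := by
  set E1 := Real.exp (-(a*x)) with hE1def
  set E2 := Real.exp (-(a*y)) with hE2def
  have hE1le : E1 ≤ 1 := Real.exp_le_one_iff.mpr (by nlinarith)
  have hE1pos : 0 < E1 := hE1def ▸ Real.exp_pos _
  have hbkE : b * k * E1 ≤ b * k :=
    (mul_le_of_le_one_right (mul_pos hb hk).le hE1le)
  have hxpos : 0 < x := by nlinarith [hx, hbkE, mul_pos hb (show (0:ℝ) < 1 - k by linarith)]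
  have key := expSlope (u := 0) ha hxpos hxy
  simp only [mul_zero, neg_zero, Real.exp_zero, sub_zero] at key
  -- key : (E1 - 1) * (y - x) < (E2 - E1) * x
  have e1 : b * k * E1 = b - x := by linear_combination hx
  have e2 : b * k * E2 = b - y := by linear_combination hy
  have hbk : (0:ℝ) < b * k := mul_pos hb hk
  have key2 : (b*k) * ((E1 - 1) * (y - x)) < (b*k) * ((E2 - E1) * x) :=
    (mul_lt_mul_iff_right₀ hbk).mpr key
  have q1 : (b*k) * ((E1 - 1) * (y - x)) = ((b - x) - b*k) * (y - x) := by
    linear_combination (y - x) * e1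
  have q2 : (b*k) * ((E2 - E1) * x) = (x - y) * x := by
    linear_combination x * e2 - x * e1
  rw [q1, q2] at key2
  have hpos : 0 < b * (1 - k) * (y - x) :=
    mul_pos (mul_pos hb (by linarith)) (by linarith)
  nlinarith [key2, hpos]

private lemma fixedUnique {a b k : ℝ} (ha : 0 < a) (hb : 0 < b) (hk : 0 < k) (hk1 : k < 1)
    {x y : ℝ} (hx0 : 0 ≤ x) (hy0 : 0 ≤ y)
    (hx : x = b * (1 - k * Real.exp (-(a*x))))
    (hy : y = b * (1 - k * Real.exp (-(a*y)))) : x = y := by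
  rcases lt_trichotomy x y with h | h | h
  · exact absurd (fixedUniqueAux ha hb hk hk1 hx0 h hx hy) (by simp)
  · exact h
  · exact absurd (fixedUniqueAux ha hb hk hk1 hy0 h hy hx) (by simp)

private lemma belowFixed {a k : ℝ} (ha : 0 < a) (hk : 0 < k) (hk1 : k < 1)
    {v w : ℝ} (hv : 0 < v) (hvw : v < w)
    (hw : w = 1 - k * Real.exp (-(a*w))) : v ≤ 1 - k * Real.exp (-(a*v)) := by
  by_contra hcon
  push_neg at hcon
  set E1 := Real.exp (-(a*v)) with hE1def
  set E2 := Real.exp (-(a*w)) with hE2def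
  have key := expSlope (u := 0) ha hv hvw
  simp only [mul_zero, neg_zero, Real.exp_zero, sub_zero] at key
  -- key : (E1 - 1) * (w - v) < (E2 - E1) * v
  have e2 : k * E2 = 1 - w := by linear_combination hw
  have key2 : k * ((E1 - 1) * (w - v)) < k * ((E2 - E1) * v) :=
    (mul_lt_mul_iff_right₀ hk).mpr key
  have q2 : k * ((E2 - E1) * v) = ((1 - w) - k * E1) * v := by
    linear_combination v * e2
  rw [q2] at key2
  have hw0 : 0 < w := hv.trans hvw
  have prod : 0 < (v - (1 - k * E1)) * w := mul_pos (by linarith) hw0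
  have prod2 : 0 < (1 - k) * (w - v) := mul_pos (by linarith) (by linarith)
  nlinarith [key2, prod, prod2]

private lemma fixedExists {a k b : ℝ} (ha : 0 < a) (hk : 0 < k) (hk1 : k < 1)
    (hb0 : 0 ≤ b) (hb1 : b ≤ 1) :
    ∃ x ∈ Icc (0:ℝ) 1, x = b * (1 - k * Real.exp (-(a*x))) := by
  set g : ℝ → ℝ := fun x => b * (1 - k * Real.exp (-(a*x))) - x with hg
  have hcont : ContinuousOn g (Icc 0 1) := by
    apply Continuous.continuousOn
    fun_prop
  have h0 : 0 ≤ g 0 := by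
    simp only [hg, mul_zero, neg_zero, Real.exp_zero, mul_one, sub_zero]
    nlinarith
  have h1 : g 1 ≤ 0 := by
    simp only [hg]
    nlinarith [mul_nonneg (mul_nonneg hb0 hk.le) (Real.exp_pos (-(a*1))).le]
  have hmem : (0:ℝ) ∈ g '' Icc 0 1 :=
    intermediate_value_Icc' (by norm_num) hcont ⟨h1, h0⟩
  obtain ⟨x, hx, hgx⟩ := hmem
  refine ⟨x, hx, ?_⟩
  have : b * (1 - k * Real.exp (-(a*x))) - x = 0 := hgx
  linarith

/-- Strong protection model on an Erdős–Rényi graph (`λ > 0`, `q⁺ ∈ (0,1]`,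
`p⁺ ∈ (0,1)`, `p⁻ = q⁻ = 0`).  For each `γ ∈ [0,1]` there is a unique solution `h(γ) ∈ [0,1]` of
`h = (1 − γ)·(1 − (1 − p⁺)·exp(−λ·q⁺·h))`.  Moreover, if `ℓ > 0` and `p⁺·ℓ < c ≤ h(0)·ℓ`,
then there exists a unique `γ* ∈ [0,1)` such that `h(γ*)·ℓ = (1 − γ*)·c`. -/
theorem stmt_8 (lam qp pp : ℝ) (hlam : 0 < lam) (hqp : qp ∈ Ioc (0:ℝ) 1)
    (hpp : pp ∈ Ioo (0:ℝ) 1) :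
    (∀ γ ∈ Icc (0:ℝ) 1, ∃! h : ℝ, h ∈ Icc (0:ℝ) 1 ∧
        h = (1 - γ) * (1 - (1 - pp) * Real.exp (-(lam * qp * h)))) ∧
    ∀ h : ℝ → ℝ,
      (∀ γ ∈ Icc (0:ℝ) 1, h γ ∈ Icc (0:ℝ) 1 ∧
        h γ = (1 - γ) * (1 - (1 - pp) * Real.exp (-(lam * qp * h γ)))) →
      ∀ c ℓ : ℝ, 0 < ℓ → pp * ℓ < c → c ≤ h 0 * ℓ →
        ∃! γstar : ℝ, γstar ∈ Ico (0:ℝ) 1 ∧ h γstar * ℓ = (1 - γstar) * c := by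
  have ha : 0 < lam * qp := mul_pos hlam hqp.1
  set a := lam * qp with hadef
  set k := 1 - pp with hkdef
  have hk : 0 < k := by simp [hkdef]; linarith [hpp.2]
  have hk1 : k < 1 := by simp [hkdef]; linarith [hpp.1]
  constructor
  · intro γ hγ
    obtain ⟨x, hxIcc, hxeq⟩ := fixedExists (b := 1 - γ) ha hk hk1
      (by linarith [hγ.2]) (by linarith [hγ.1])
    refine ⟨x, ⟨hxIcc, hxeq⟩, ?_⟩
    rintro y ⟨hyIcc, hyeq⟩
    rcases eq_or_lt_of_le (show γ ≤ 1 from hγ.2) with hγ1 | hγ1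
    · rw [← hγ1, sub_self, zero_mul] at hxeq hyeq
      rw [hxeq, hyeq]
    · exact fixedUnique ha (by linarith) hk hk1 hyIcc.1 hxIcc.1 hyeq hxeq
  · intro h hH c ℓ hl hc1 hc2
    obtain ⟨h0Icc, h0eq⟩ := hH 0 ⟨le_refl _, zero_le_one⟩
    rw [sub_zero, one_mul] at h0eq
    have hE0le : Real.exp (-(a * h 0)) ≤ 1 :=
      Real.exp_le_one_iff.mpr (by nlinarith [h0Icc.1])
    have hE0pos := Real.exp_pos (-(a * h 0))
    have h0pos : 0 < h 0 := by nlinarith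
    have h0lt1 : h 0 < 1 := by nlinarith
    have hcl : c < ℓ := by nlinarith [h0Icc.2]
    have hcpos : 0 < c := by nlinarith [hpp.1]
    have hkl : 0 < k * ℓ := mul_pos hk hl
    set r := (ℓ - c) / (k * ℓ) with hrdef
    have hrpos : 0 < r := div_pos (by linarith) hkl
    have hkr : k * r = 1 - c / ℓ := by
      rw [hrdef]
      field_simp
    have hr1 : r < 1 := (div_lt_one hkl).mpr (by nlinarith [hpp.1])
    set hs := -Real.log r / a with hhs
    have hlogneg : Real.log r < 0 := Real.log_neg hrpos hr1
    have hspos : 0 < hs := div_pos (by linarith) ha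
    have hEs : Real.exp (-(a * hs)) = r := by
      rw [hhs, show -(a * (-Real.log r / a)) = Real.log r by field_simp,
        Real.exp_log hrpos]
    have hcll : c / ℓ ≤ h 0 := (div_le_iff₀ hl).mpr (by linarith)
    have hsle : hs ≤ h 0 := by
      have h1 : k * Real.exp (-(a * h 0)) ≤ k * r := by
        rw [hkr]; nlinarith [h0eq, hcll]
      have h2 : Real.exp (-(a * h 0)) ≤ Real.exp (-(a * hs)) := by
        rw [hEs]; exact (mul_le_mul_iff_right₀ hk).mp h1
      have := Real.exp_le_exp.mp h2
      nlinarith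
    have hsc : hs * ℓ ≤ c := by
      have hsdl : hs ≤ c / ℓ := by
        rcases eq_or_lt_of_le hsle with heq | hlt
        · have : hs = 1 - k * Real.exp (-(a * hs)) := by rw [heq]; exact h0eq
          rw [hEs, hkr] at this
          linarith
        · have := belowFixed ha hk hk1 hspos hlt h0eq
          rw [hEs, hkr] at this
          linarith
      exact (le_div_iff₀ hl).mp hsdl
    set γs := 1 - hs * ℓ / c with hγsdef
    have hb : 1 - γs = hs * ℓ / c := by rw [hγsdef]; ring
    have hbpos : 0 < hs * ℓ / c := div_pos (mul_pos hspos hl) hcpos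
    have hγs0 : 0 ≤ γs := by
      have : hs * ℓ / c ≤ 1 := (div_le_one hcpos).mpr hsc
      rw [hγsdef]; linarith
    have hγs1 : γs < 1 := by rw [hγsdef]; linarith
    have hsfix : hs = (1 - γs) * (1 - k * Real.exp (-(a * hs))) := by
      rw [hb, hEs, hkr]
      field_simp
      ring
    have hsIcc : hs ∈ Icc (0:ℝ) 1 := ⟨hspos.le, hsle.trans h0Icc.2⟩
    obtain ⟨hγIcc, hγeq⟩ := hH γs ⟨hγs0, hγs1.le⟩
    have hbpos' : 0 < 1 - γs := by rw [hb]; exact hbpos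
    have hhγ : h γs = hs := fixedUnique ha hbpos' hk hk1 hγIcc.1 hsIcc.1 hγeq hsfix
    refine ⟨γs, ⟨⟨hγs0, hγs1⟩, ?_⟩, ?_⟩
    · rw [hhγ, hb]
      field_simp
    · rintro γ ⟨⟨hγ0, hγ1⟩, hγe⟩
      obtain ⟨hIcc2, heq2⟩ := hH γ ⟨hγ0, hγ1.le⟩
      have hbγ : 0 < 1 - γ := by linarith
      have h3' : (1 - γ) * (c / ℓ) = h γ := by
        field_simp
        linarith [hγe]
      have h3 : (1 - γ) * (c / ℓ) = (1 - γ) * (1 - k * Real.exp (-(a * h γ))) := by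
        rw [h3']; exact heq2
      have h2 : c / ℓ = 1 - k * Real.exp (-(a * h γ)) :=
        mul_left_cancel₀ (ne_of_gt hbγ) h3
      have h4 : Real.exp (-(a * h γ)) = r := by
        have hh : k * Real.exp (-(a * h γ)) = k * r := by rw [hkr]; linarith
        exact mul_left_cancel₀ hk.ne' hh
      have h5 : h γ = hs := by
        have he := Real.exp_eq_exp.mp (h4.trans hEs.symm)
        have : a * h γ = a * hs := by linarith
        exact mul_left_cancel₀ ha.ne' this
      have hγc : (1 - γ) * c = (1 - γs) * c := by
        rw [hb]
        rw [div_mul_cancel₀ _ hcpos.ne']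
        rw [← hγe, h5]
      have := mul_right_cancel₀ hcpos.ne' hγc
      linarith
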